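/- (Sharp threshold for ideals) Let Q be an ideal in the lattice of subspaces of (F_q)^n and 1 ≤ k ≤ n−1. If μ_k(Q) = 1/(1+z) with z > 0, then μ_{k+1}(Q) ≤ 1/(1+qz). Consequently, for any integer c ≥ 1 with k+c ≤ n, μ_{k+c}(Q) ≤ 1/(1+q^c·z). -/

import Mathlib

set_option synthInstance.maxHeartbeats 1000000
set_option maxHeartbeats 1000000
set_option linter.unusedSectionVars false
open Module Finset

/-- Density at dimension k among k-dimensional subspaces. -/
noncomputable def mu (F : Type) [Field F] [Fintype F] (n k : ℕ)
    (Q : Set (Submodule F (Fin n → F))) : ℝ :=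
  (Nat.card {A : Submodule F (Fin n → F) | A ∈ Q ∧ Module.finrank F A = k} : ℝ) /
    (Nat.card {A : Submodule F (Fin n → F) | Module.finrank F A = k} : ℝ)

open scoped Classical
noncomputable section
namespace Sharp
variable {F : Type} [Field F] [Fintype F] {n : ℕ}

/-- Gaussian number [m]_q = 1 + q + ... + q^(m-1). -/
def nq (q m : ℕ) : ℕ := ∑ i ∈ Finset.range m, q ^ i

lemma nq_succ (q m : ℕ) : nq q (m + 1) = 1 + q * nq q m := by
  rw [nq, nq, geom_sum_succ]
  ring

lemma nq_mul_pred (q m : ℕ) (hq : 1 ≤ q) : nq q m * (q - 1) + 1 = q ^ m := by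
  induction m with
  | zero => simp [nq]
  | succ m ih =>
    rw [nq, geom_sum_succ'] at *
    calc (q ^ m + ∑ i ∈ Finset.range m, q ^ i) * (q - 1) + 1
        = q ^ m * (q - 1) + ((∑ i ∈ Finset.range m, q ^ i) * (q - 1) + 1) := by ring
      _ = q ^ m * (q - 1) + q ^ m := by rw [ih]
      _ = q ^ m * (q - 1 + 1) := by ring
      _ = q ^ m * q := by rw [Nat.sub_add_cancel hq]
      _ = q ^ (m + 1) := by ring

lemma nq_pos (q m : ℕ) (hm : 1 ≤ m) : 0 < nq q m := by
  cases m with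
  | zero => omega
  | succ m => rw [nq_succ]; omega

/-- Number of 1-dimensional subspaces of a finite vector space. -/
lemma card_lines (M : Type) [AddCommGroup M] [Module F M] [Fintype M] :
    Nat.card {L : Submodule F M // finrank F L = 1} = nq (Fintype.card F) (finrank F M) := by
  classical
  letI : Fintype (Submodule F M) := Fintype.ofFinite _
  set q := Fintype.card F with hq
  have hq2 : 2 ≤ q := Fintype.one_lt_card
  set lines : Finset (Submodule F M) := univ.filter (fun L => finrank F L = 1) with hlines
  have key : ((univ : Finset M).erase 0).card
      = ∑ L ∈ lines, (((univ : Finset M).erase 0).filter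
          (fun v => Submodule.span F {v} = L)).card := by
    apply Finset.card_eq_sum_card_fiberwise
    intro v hv
    simp only [hlines, mem_filter, mem_univ, true_and]
    exact Finset.mem_coe.mpr (by
      simp only [hlines, mem_filter, mem_univ, true_and]
      exact finrank_span_singleton (K := F) (Finset.mem_erase.mp hv).1)
  have fiber : ∀ L ∈ lines, (((univ : Finset M).erase 0).filter
      (fun v => Submodule.span F {v} = L)).card = q - 1 := by
    intro L hL
    have hL1 : finrank F L = 1 := by
      simpa [hlines] using hL
    have hset : (((univ : Finset M).erase 0).filter (fun v => Submodule.span F {v} = L))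
        = (L : Set M).toFinset.erase 0 := by
      ext v
      simp only [mem_filter, mem_erase, mem_univ, true_and, Set.mem_toFinset, SetLike.mem_coe,
        and_true]
      constructor
      · rintro ⟨hv0, rfl⟩
        exact ⟨hv0, Submodule.mem_span_singleton_self v⟩
      · rintro ⟨hv0, hvL⟩
        refine ⟨hv0, ?_⟩
        have hle : Submodule.span F {v} ≤ L := by
          rw [Submodule.span_le]; simpa using hvL
        exact Submodule.eq_of_le_of_finrank_le hle
          (by rw [hL1, finrank_span_singleton hv0])
    rw [hset]
    have h0 : (0 : M) ∈ (L : Set M).toFinset := by simp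
    rw [Finset.card_erase_of_mem h0, Set.toFinset_card]
    have hcL : Fintype.card ((L : Set M)) = q ^ finrank F L := by
      rw [show Fintype.card ((L : Set M)) = Fintype.card L from Fintype.card_congr (Equiv.refl _)]
      exact card_eq_pow_finrank
    rw [hcL, hL1, pow_one]
  have hcards : Fintype.card M - 1 = lines.card * (q - 1) := by
    rw [← Finset.card_univ, ← Finset.card_erase_of_mem (Finset.mem_univ (0:M)), key]
    rw [Finset.sum_congr rfl fiber, Finset.sum_const, smul_eq_mul]
  have hM : Fintype.card M = q ^ finrank F M := card_eq_pow_finrank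
  have hnq := nq_mul_pred q (finrank F M) (by omega)
  have hlc : lines.card * (q-1) = nq q (finrank F M) * (q-1) := by omega
  have hcard : lines.card = nq q (finrank F M) :=
    Nat.eq_of_mul_eq_mul_right (by omega) hlc
  rw [← hcard]
  rw [Nat.card_eq_fintype_card]
  rw [Fintype.card_subtype]

/-- Number of codimension-1 subspaces of a finite vector space equals the number of lines. -/
lemma card_hyp (M : Type) [AddCommGroup M] [Module F M] [Fintype M] (hm1 : 1 ≤ finrank F M) :
    Nat.card {C : Submodule F M // finrank F C = finrank F M - 1}
      = Nat.card {L : Submodule F (Module.Dual F M) // finrank F L = 1} := by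
  classical
  set m := finrank F M with hm
  have hrk : ∀ C : Submodule F M, finrank F (Submodule.dualAnnihilator C) = m - finrank F C := by
    intro C
    have h1 := Submodule.finrank_quotient_add_finrank C
    have h2 : finrank F (M ⧸ C) = finrank F (Submodule.dualAnnihilator C) :=
      (Subspace.quotEquivAnnihilator C).finrank_eq
    have h3 : finrank F C ≤ m := Submodule.finrank_le C
    omega
  have hrk2 : ∀ L : Submodule F (Module.Dual F M),
      finrank F (Submodule.dualCoannihilator L) = m - finrank F L := by
    intro L
    have h1 := Subspace.finrank_add_finrank_dualCoannihilator_eq L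
    have h3 : finrank F L ≤ finrank F (Module.Dual F M) := Submodule.finrank_le L
    omega
  apply Nat.card_congr
  refine ⟨fun C => ⟨Submodule.dualAnnihilator C.1, ?_⟩,
          fun L => ⟨Submodule.dualCoannihilator L.1, ?_⟩, ?_, ?_⟩
  · obtain ⟨C, hC⟩ := C
    have := hrk C
    simp only [hC] at this
    rw [this]
    have : finrank F C ≤ m := Submodule.finrank_le C
    omega
  · have := hrk2 L.1
    rw [this, L.2]
  · rintro ⟨C, hC⟩
    simp only [Subtype.mk.injEq]
    exact Subspace.dualAnnihilator_dualCoannihilator_eq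
  · rintro ⟨L, hL⟩
    simp only [Subtype.mk.injEq]
    have hle := Submodule.le_dualCoannihilator_dualAnnihilator L
    refine (Submodule.eq_of_le_of_finrank_le hle ?_).symm
    rw [hrk (Submodule.dualCoannihilator L), hrk2 L, hL]
    omega
variable (F n) in
/-- All subspaces of dimension j, as a Finset. -/
def Gr (j : ℕ) : Finset (Submodule F (Fin n → F)) :=
  @Finset.filter _ (fun A => finrank F A = j) (Classical.decPred _)
    (@Finset.univ _ (Fintype.ofFinite _))

lemma mem_Gr {j : ℕ} {A : Submodule F (Fin n → F)} : A ∈ Gr F n j ↔ finrank F A = j := by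
  simp [Gr]

lemma card_filter_eq_natCard {α : Type} [Finite α] (s : Finset α) (p : α → Prop) :
    (s.filter p).card = Nat.card {x : α // x ∈ s ∧ p x} := by
  cases nonempty_fintype α
  rw [Nat.card_eq_fintype_card]
  convert (Fintype.card_subtype (fun x => x ∈ s ∧ p x)).symm using 1
  congr 1
  ext x
  simp

lemma Gr_filter_card (j : ℕ) (p : Submodule F (Fin n → F) → Prop) :
    ((Gr F n j).filter (fun A => p A)).card
      = Nat.card {A : Submodule F (Fin n → F) // finrank F A = j ∧ p A} := by
  rw [card_filter_eq_natCard]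
  apply Nat.card_congr
  exact Equiv.subtypeEquivRight (by intro x; rw [mem_Gr])

/-- Rank additivity for the image in a quotient. -/
lemma finrank_map_mkQ {A B : Submodule F (Fin n → F)} (hAB : A ≤ B) :
    finrank F (B.map A.mkQ) + finrank F A = finrank F B := by
  have h := LinearMap.finrank_range_add_finrank_ker (A.mkQ.comp B.subtype)
  have hrange : LinearMap.range (A.mkQ.comp B.subtype) = B.map A.mkQ := by
    rw [LinearMap.range_comp, Submodule.range_subtype]
  have hker : LinearMap.ker (A.mkQ.comp B.subtype) = Submodule.comap B.subtype A := by
    rw [LinearMap.ker_comp, Submodule.ker_mkQ]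
  rw [hrange, hker] at h
  rw [← h]
  congr 1
  exact (Submodule.comapSubtypeEquivOfLe hAB).finrank_eq.symm

lemma finrank_comap_mkQ (A : Submodule F (Fin n → F)) (L : Submodule F ((Fin n → F) ⧸ A)) :
    finrank F (L.comap A.mkQ) = finrank F L + finrank F A := by
  have hle : A ≤ L.comap A.mkQ := by
    intro x hx
    simp only [Submodule.mem_comap, Submodule.mkQ_apply]
    rw [(Submodule.Quotient.mk_eq_zero A).2 hx]
    exact L.zero_mem
  have hmap : (L.comap A.mkQ).map A.mkQ = L :=
    Submodule.map_comap_eq_of_surjective (Submodule.mkQ_surjective A) L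
  have := finrank_map_mkQ hle
  rw [hmap] at this
  omega

/-- The number of (j+1)-dimensional superspaces of a j-dimensional space. -/
lemma L_up {j : ℕ} (hj : j + 1 ≤ n) {A : Submodule F (Fin n → F)} (hA : finrank F A = j) :
    ((Gr F n (j+1)).filter (fun B => A ≤ B)).card = nq (Fintype.card F) (n - j) := by
  rw [Gr_filter_card]
  have e : {B : Submodule F (Fin n → F) // finrank F B = j + 1 ∧ A ≤ B}
      ≃ {L : Submodule F ((Fin n → F) ⧸ A) // finrank F L = 1} := by
    refine ⟨fun B => ⟨B.1.map A.mkQ, ?_⟩, fun L => ⟨L.1.comap A.mkQ, ?_, ?_⟩, ?_, ?_⟩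
    · have := finrank_map_mkQ B.2.2
      rw [B.2.1, hA] at this
      omega
    · rw [finrank_comap_mkQ, L.2, hA]; omega
    · intro x hx
      simp only [Submodule.mem_comap, Submodule.mkQ_apply]
      rw [(Submodule.Quotient.mk_eq_zero A).2 hx]
      exact L.1.zero_mem
    · rintro ⟨B, hB1, hB2⟩
      simp only [Subtype.mk.injEq]
      rw [Submodule.comap_map_eq, Submodule.ker_mkQ, sup_eq_left.mpr hB2]
    · rintro ⟨L, hL⟩
      simp only [Subtype.mk.injEq]
      exact Submodule.map_comap_eq_of_surjective (Submodule.mkQ_surjective A) L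
  rw [Nat.card_congr e]
  letI : Fintype ((Fin n → F) ⧸ A) := Fintype.ofFinite _
  rw [card_lines]
  congr 1
  have h := Submodule.finrank_quotient_add_finrank A
  have hn : finrank F (Fin n → F) = n := Module.finrank_fin_fun F
  omega

/-- The number of (j-1)-dimensional subspaces of a j-dimensional space. -/
lemma L_down {j : ℕ} (hj : 1 ≤ j) {B : Submodule F (Fin n → F)} (hB : finrank F B = j) :
    ((Gr F n (j-1)).filter (fun C => C ≤ B)).card = nq (Fintype.card F) j := by
  rw [Gr_filter_card]
  have e : {C : Submodule F (Fin n → F) // finrank F C = j - 1 ∧ C ≤ B}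
      ≃ {C' : Submodule F B // finrank F C' = finrank F (↥B) - 1} := by
    refine ⟨fun C => ⟨C.1.comap B.subtype, ?_⟩, fun C' => ⟨C'.1.map B.subtype, ?_, ?_⟩, ?_, ?_⟩
    · have h1 : finrank F (C.1.comap B.subtype) = finrank F C.1 :=
        (Submodule.comapSubtypeEquivOfLe C.2.2).finrank_eq
      rw [h1, C.2.1, hB]
    · rw [Submodule.finrank_map_subtype_eq, C'.2, hB]
    · rintro x ⟨y, hy, rfl⟩
      exact y.2
    · rintro ⟨C, hC1, hC2⟩
      simp only [Subtype.mk.injEq]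
      rw [Submodule.map_comap_subtype, inf_eq_right.mpr hC2]
    · rintro ⟨C', hC'⟩
      simp only [Subtype.mk.injEq]
      rw [Submodule.comap_map_eq, Submodule.ker_subtype, sup_bot_eq]
  rw [Nat.card_congr e]
  letI : Fintype (↥B) := Fintype.ofFinite _
  haveI : Finite (Module.Dual F ↥B) :=
    Finite.of_injective (fun φ => (φ : ↥B → F)) DFunLike.coe_injective
  letI : Fintype (Module.Dual F ↥B) := Fintype.ofFinite _
  rw [card_hyp (↥B) (by rw [hB]; omega), card_lines]
  congr 1
  rw [Subspace.dual_finrank_eq, hB]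

/-- Pair-count symmetry: common (j+1)-superspaces vs common (j-1)-subspaces. -/
lemma L_pair {j : ℕ} (hj1 : 1 ≤ j) (hj : j + 1 ≤ n) {A A' : Submodule F (Fin n → F)}
    (hA : finrank F A = j) (hA' : finrank F A' = j) (hne : A ≠ A') :
    ((Gr F n (j+1)).filter (fun B => A ≤ B ∧ A' ≤ B)).card
      = ((Gr F n (j-1)).filter (fun C => C ≤ A ∧ C ≤ A')).card := by
  have hsum : finrank F ↥(A ⊔ A') + finrank F ↥(A ⊓ A') = j + j := by
    rw [Submodule.finrank_sup_add_finrank_inf_eq, hA, hA']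
  have hinf_lt : A ⊓ A' < A := by
    rcases lt_or_eq_of_le (inf_le_left : A ⊓ A' ≤ A) with h | h
    · exact h
    · exfalso
      apply hne
      have hle : A ≤ A' := by rw [← h]; exact inf_le_right
      exact Submodule.eq_of_le_of_finrank_le hle (by omega)
  have hinf_rank : finrank F ↥(A ⊓ A') < j := by
    rw [← hA]
    exact Submodule.finrank_lt_finrank_of_lt hinf_lt
  rcases Nat.lt_or_ge (finrank F ↥(A ⊓ A')) (j - 1) with hlt | hge
  · -- both counts are 0
    have h1 : (Gr F n (j+1)).filter (fun B => A ≤ B ∧ A' ≤ B) = ∅ := by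
      ext B
      simp only [mem_filter, mem_Gr, Finset.notMem_empty, iff_false, not_and]
      rintro hBrank hAB hA'B
      have hle := Submodule.finrank_mono (sup_le hAB hA'B)
      rw [hBrank] at hle
      omega
    have h2 : (Gr F n (j-1)).filter (fun C => C ≤ A ∧ C ≤ A') = ∅ := by
      ext C
      simp only [mem_filter, mem_Gr, Finset.notMem_empty, iff_false, not_and]
      rintro hCrank hCA hCA'
      have hle := Submodule.finrank_mono (le_inf hCA hCA')
      rw [hCrank] at hle
      omega
    rw [h1, h2]
  · -- finrank (A ⊓ A') = j - 1 : both counts are 1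
    have heq : finrank F ↥(A ⊓ A') = j - 1 := by omega
    have hsup_rank : finrank F ↥(A ⊔ A') = j + 1 := by omega
    have h1 : (Gr F n (j+1)).filter (fun B => A ≤ B ∧ A' ≤ B) = {A ⊔ A'} := by
      ext B
      simp only [mem_filter, mem_Gr, Finset.mem_singleton]
      constructor
      · rintro ⟨hBrank, hAB, hA'B⟩
        exact (Submodule.eq_of_le_of_finrank_le (sup_le hAB hA'B) (by omega)).symm
      · rintro rfl
        exact ⟨hsup_rank, le_sup_left, le_sup_right⟩
    have h2 : (Gr F n (j-1)).filter (fun C => C ≤ A ∧ C ≤ A') = {A ⊓ A'} := by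
      ext C
      simp only [mem_filter, mem_Gr, Finset.mem_singleton]
      constructor
      · rintro ⟨hCrank, hCA, hCA'⟩
        exact Submodule.eq_of_le_of_finrank_le (le_inf hCA hCA') (by omega)
      · rintro rfl
        exact ⟨heq, inf_le_left, inf_le_right⟩
    rw [h1, h2]
    simp

lemma Gr_nonempty {j : ℕ} (hj : j ≤ n) : (Gr F n j).Nonempty := by
  have hli : LinearIndependent F (fun i : Fin j => (Pi.basisFun F (Fin n)) (Fin.castLE hj i)) :=
    (Pi.basisFun F (Fin n)).linearIndependent.comp _ (Fin.castLE_injective hj)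
  refine ⟨Submodule.span F (Set.range fun i : Fin j => (Pi.basisFun F (Fin n)) (Fin.castLE hj i)), ?_⟩
  rw [mem_Gr, finrank_span_eq_card hli, Fintype.card_fin]

lemma Gr_zero : Gr F n 0 = {⊥} := by
  ext A
  simp only [mem_Gr, Finset.mem_singleton]
  exact Submodule.finrank_eq_zero

/-- Double counting. -/
lemma double_count {α β : Type} (s : Finset α) (t : Finset β) (r : α → β → Prop) :
    ∑ a ∈ s, (t.filter (fun b => r a b)).card = ∑ b ∈ t, (s.filter (fun a => r a b)).card := by
  simp only [Finset.card_filter]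
  rw [Finset.sum_comm]

lemma flag_count {j : ℕ} (hj : j + 1 ≤ n) :
    (Gr F n j).card * nq (Fintype.card F) (n - j)
      = (Gr F n (j+1)).card * nq (Fintype.card F) (j+1) := by
  have h := double_count (Gr F n j) (Gr F n (j+1)) (fun A B => A ≤ B)
  have h1 : ∑ A ∈ Gr F n j, ((Gr F n (j+1)).filter (fun B => A ≤ B)).card
      = ∑ _A ∈ Gr F n j, nq (Fintype.card F) (n - j) :=
    Finset.sum_congr rfl (fun A hA => L_up hj (mem_Gr.mp hA))
  have h2 : ∑ B ∈ Gr F n (j+1), ((Gr F n j).filter (fun A => A ≤ B)).card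
      = ∑ _B ∈ Gr F n (j+1), nq (Fintype.card F) (j+1) :=
    Finset.sum_congr rfl (fun B hB => by
        simpa using L_down (j := j + 1) (by omega) (mem_Gr.mp hB))
  rw [h1, h2] at h
  simpa using h

/-! ### Spectral part -/

variable (F n) in
def upS (j : ℕ) (f : Submodule F (Fin n → F) → ℝ) (B : Submodule F (Fin n → F)) : ℝ :=
  ∑ A ∈ Gr F n j, if A ≤ B then f A else 0

variable (F n) in
def downS (j : ℕ) (f : Submodule F (Fin n → F) → ℝ) (C : Submodule F (Fin n → F)) : ℝ :=
  ∑ A ∈ Gr F n j, if C ≤ A then f A else 0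

lemma sq_expand {α β : Type} (s : Finset α) (t : Finset β) (r : α → β → Prop) (f : α → ℝ) :
    ∑ b ∈ t, (∑ a ∈ s, if r a b then f a else 0)^2
      = ∑ a ∈ s, ∑ a' ∈ s, f a * f a' * ((t.filter (fun b => r a b ∧ r a' b)).card : ℝ) := by
  have expand : ∀ b, (∑ a ∈ s, if r a b then f a else 0)^2
      = ∑ a ∈ s, ∑ a' ∈ s, (if r a b ∧ r a' b then f a * f a' else 0) := by
    intro b
    rw [sq, Finset.sum_mul_sum]
    refine Finset.sum_congr rfl (fun a _ => Finset.sum_congr rfl (fun a' _ => ?_))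
    by_cases h1 : r a b <;> by_cases h2 : r a' b <;> simp [h1, h2]
  have swap : ∑ b ∈ t, ∑ a ∈ s, ∑ a' ∈ s, (if r a b ∧ r a' b then f a * f a' else 0)
      = ∑ a ∈ s, ∑ a' ∈ s, ∑ b ∈ t, (if r a b ∧ r a' b then f a * f a' else 0) := by
    rw [Finset.sum_comm]
    exact Finset.sum_congr rfl (fun a _ => Finset.sum_comm)
  have inner : ∀ a a', ∑ b ∈ t, (if r a b ∧ r a' b then f a * f a' else 0)
      = f a * f a' * ((t.filter (fun b => r a b ∧ r a' b)).card : ℝ) := by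
    intro a a'
    rw [Finset.card_filter]
    push_cast
    rw [Finset.mul_sum]
    refine Finset.sum_congr rfl (fun b _ => ?_)
    by_cases h : r a b ∧ r a' b <;> simp [h]
  calc ∑ b ∈ t, (∑ a ∈ s, if r a b then f a else 0)^2
      = ∑ b ∈ t, ∑ a ∈ s, ∑ a' ∈ s, (if r a b ∧ r a' b then f a * f a' else 0) := by
        exact Finset.sum_congr rfl (fun b _ => expand b)
    _ = ∑ a ∈ s, ∑ a' ∈ s, ∑ b ∈ t, (if r a b ∧ r a' b then f a * f a' else 0) := swap
    _ = ∑ a ∈ s, ∑ a' ∈ s, f a * f a' * ((t.filter (fun b => r a b ∧ r a' b)).card : ℝ) :=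
        Finset.sum_congr rfl (fun a _ => Finset.sum_congr rfl (fun a' _ => inner a a'))

lemma key_identity {j : ℕ} (hj1 : 1 ≤ j) (hj : j + 1 ≤ n) (f : Submodule F (Fin n → F) → ℝ) :
    ∑ B ∈ Gr F n (j+1), (upS F n j f B)^2
        + (nq (Fintype.card F) j : ℝ) * ∑ A ∈ Gr F n j, (f A)^2
      = (nq (Fintype.card F) (n-j) : ℝ) * ∑ A ∈ Gr F n j, (f A)^2
        + ∑ C ∈ Gr F n (j-1), (downS F n j f C)^2 := by
  have hup := sq_expand (Gr F n j) (Gr F n (j+1)) (fun A B => A ≤ B) f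
  have hdn := sq_expand (Gr F n j) (Gr F n (j-1)) (fun A C => C ≤ A) f
  simp only [upS, downS]
  rw [hup, hdn, Finset.mul_sum, Finset.mul_sum, ← Finset.sum_add_distrib,
    ← Finset.sum_add_distrib]
  refine Finset.sum_congr rfl (fun A hA => ?_)
  have hAr := mem_Gr.mp hA
  rw [← Finset.add_sum_erase _ _ hA, ← Finset.add_sum_erase _ _ hA]
  have offdiag : ∑ A' ∈ (Gr F n j).erase A,
        f A * f A' * (((Gr F n (j+1)).filter (fun B => A ≤ B ∧ A' ≤ B)).card : ℝ)
      = ∑ A' ∈ (Gr F n j).erase A,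
        f A * f A' * (((Gr F n (j-1)).filter (fun C => C ≤ A ∧ C ≤ A')).card : ℝ) := by
    refine Finset.sum_congr rfl (fun A' hA' => ?_)
    have hne : A ≠ A' := fun h => (Finset.mem_erase.mp hA').1 h.symm
    rw [L_pair hj1 hj hAr (mem_Gr.mp (Finset.mem_erase.mp hA').2) hne]
  rw [offdiag]
  have d1 : ((Gr F n (j+1)).filter (fun B => A ≤ B ∧ A ≤ B)).card
      = nq (Fintype.card F) (n-j) := by
    rw [Finset.filter_congr (fun B _ => by simp : ∀ B ∈ Gr F n (j+1), (A ≤ B ∧ A ≤ B) ↔ A ≤ B)]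
    exact L_up hj hAr
  have d2 : ((Gr F n (j-1)).filter (fun C => C ≤ A ∧ C ≤ A)).card
      = nq (Fintype.card F) j := by
    rw [Finset.filter_congr (fun C _ => by simp : ∀ C ∈ Gr F n (j-1), (C ≤ A ∧ C ≤ A) ↔ C ≤ A)]
    exact L_down hj1 hAr
  rw [d1, d2]
  ring

lemma downS_sum_zero {j : ℕ} (hj1 : 1 ≤ j) (f : Submodule F (Fin n → F) → ℝ)
    (hf : ∑ A ∈ Gr F n j, f A = 0) :
    ∑ C ∈ Gr F n (j-1), downS F n j f C = 0 := by
  unfold downS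
  rw [Finset.sum_comm]
  have : ∀ A ∈ Gr F n j, ∑ C ∈ Gr F n (j-1), (if C ≤ A then f A else 0)
      = (nq (Fintype.card F) j : ℝ) * f A := by
    intro A hA
    have : ∑ C ∈ Gr F n (j-1), (if C ≤ A then f A else 0)
        = (((Gr F n (j-1)).filter (fun C => C ≤ A)).card : ℝ) * f A := by
      rw [Finset.card_filter]
      push_cast
      rw [Finset.sum_mul]
      refine Finset.sum_congr rfl (fun C _ => ?_)
      by_cases h : C ≤ A <;> simp [h]
    rw [this, L_down hj1 (mem_Gr.mp hA)]
  rw [Finset.sum_congr rfl this, ← Finset.mul_sum, hf, mul_zero]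

lemma downS_adjoint {j : ℕ} (f g : Submodule F (Fin n → F) → ℝ) :
    ∑ C ∈ Gr F n (j-1), downS F n j f C * g C
      = ∑ A ∈ Gr F n j, f A * upS F n (j-1) g A := by
  unfold downS upS
  simp only [Finset.sum_mul, Finset.mul_sum]
  rw [Finset.sum_comm]
  refine Finset.sum_congr rfl (fun A _ => Finset.sum_congr rfl (fun C _ => ?_))
  by_cases h : C ≤ A <;> simp [h]

lemma spec : ∀ j : ℕ, j + 1 ≤ n → ∀ f : Submodule F (Fin n → F) → ℝ,
    (∑ A ∈ Gr F n j, f A) = 0 →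
    ∑ B ∈ Gr F n (j+1), (upS F n j f B)^2
      ≤ ((Fintype.card F) * nq (Fintype.card F) j * nq (Fintype.card F) (n-1-j) : ℝ)
          * ∑ A ∈ Gr F n j, (f A)^2 := by
  intro j
  induction j with
  | zero =>
    intro hj f hf
    rw [Gr_zero, Finset.sum_singleton] at hf
    have : ∀ B ∈ Gr F n 1, (upS F n 0 f B)^2 = 0 := by
      intro B _
      unfold upS
      rw [Gr_zero, Finset.sum_singleton, if_pos bot_le, hf]
      norm_num
    rw [Finset.sum_congr rfl this, Finset.sum_const, smul_zero]
    have : (nq (Fintype.card F) 0 : ℝ) = 0 := by norm_num [nq]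
    rw [this]
    have h2 : (0:ℝ) ≤ ∑ A ∈ Gr F n 0, (f A)^2 := Finset.sum_nonneg fun A _ => sq_nonneg _
    nlinarith
  | succ m ih =>
    intro hj f hf
    set q : ℕ := Fintype.card F with hqdef
    -- the down-shadow function
    set g : Submodule F (Fin n → F) → ℝ := downS F n (m+1) f with hg
    set X : ℝ := ∑ C ∈ Gr F n m, (g C)^2 with hX
    have hXnonneg : 0 ≤ X := Finset.sum_nonneg fun C _ => sq_nonneg _
    have hsf : (0:ℝ) ≤ ∑ A ∈ Gr F n (m+1), (f A)^2 :=
      Finset.sum_nonneg fun A _ => sq_nonneg _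
    have hgsum : ∑ C ∈ Gr F n m, g C = 0 := by
      have := downS_sum_zero (j := m+1) (by omega) f hf
      simpa using this
    -- Cauchy-Schwarz + adjointness + induction hypothesis
    have hadj : ∑ C ∈ Gr F n ((m+1)-1), downS F n (m+1) f C * g C
        = ∑ A ∈ Gr F n (m+1), f A * upS F n ((m+1)-1) g A := downS_adjoint f g
    simp only [Nat.add_sub_cancel] at hadj
    have hCS : X^2 ≤ (∑ A ∈ Gr F n (m+1), (f A)^2)
        * (∑ A ∈ Gr F n (m+1), (upS F n m g A)^2) := by
      have hXmul : X = ∑ C ∈ Gr F n m, g C * g C :=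
        Finset.sum_congr rfl (fun C _ => pow_two (g C))
      have : X = ∑ A ∈ Gr F n (m+1), f A * upS F n m g A := by rw [hXmul, ← hadj]
      rw [this]
      exact Finset.sum_mul_sq_le_sq_mul_sq _ _ _
    have hIH := ih (by omega) g hgsum
    set T : ℝ := ∑ A ∈ Gr F n (m+1), (f A)^2 with hT
    set Sm : ℝ := ((q : ℝ) * nq q m * nq q (n-1-m)) with hSm
    have hSmnonneg : (0:ℝ) ≤ Sm := by positivity
    have hX2 : X^2 ≤ T * (Sm * X) := by
      calc X^2 ≤ T * (∑ A ∈ Gr F n (m+1), (upS F n m g A)^2) := hCS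
        _ ≤ T * (Sm * X) := by
            apply mul_le_mul_of_nonneg_left _ hsf
            exact hIH
    have hXle : X ≤ Sm * T := by
      rcases le_or_gt X 0 with h | h
      · calc X ≤ 0 := h
          _ ≤ Sm * T := by positivity
      · nlinarith [hX2]
    have hKI := key_identity (j := m+1) (by omega) hj f
    simp only [Nat.add_sub_cancel] at hKI
    rw [show n - 1 - (m+1) = n - m - 2 by omega]
    rw [show n - (m+1) = n - m - 1 by omega] at hKI
    have hidN : nq q (n-m-1) + q * nq q m * nq q (n-m-1)
        = q * nq q (m+1) * nq q (n-m-2) + nq q (m+1) := by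
      have h1 : nq q (m+1) = 1 + q * nq q m := nq_succ q m
      have h2 : nq q (n-m-1) = 1 + q * nq q (n-m-2) := by
        rw [show n-m-1 = (n-m-2)+1 by omega]; exact nq_succ q (n-m-2)
      rw [h1, h2]; ring
    have hidR : ((nq q (n-m-1) : ℝ) + (q:ℝ) * nq q m * nq q (n-m-1)) * T
        = ((q:ℝ) * nq q (m+1) * nq q (n-m-2) + (nq q (m+1) : ℝ)) * T := by
      have : ((nq q (n-m-1) + q * nq q m * nq q (n-m-1) : ℕ) : ℝ)
          = ((q * nq q (m+1) * nq q (n-m-2) + nq q (m+1) : ℕ) : ℝ) := by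
        exact_mod_cast congrArg (fun t : ℕ => (t : ℝ)) hidN
      push_cast at this
      rw [this]
    have hSmT : Sm * T = ((q:ℝ) * nq q m * nq q (n-m-1)) * T := by
      rw [hSm, show n-1-m = n-m-1 by omega]
    rw [hSmT] at hXle
    nlinarith [hKI, hXle, hsf, hidR]

/-! ### The one-step density increment -/

lemma one_step {j : ℕ} (hj : j + 1 ≤ n) (Q : Set (Submodule F (Fin n → F)))
    (hQ : ∀ A ∈ Q, ∀ B : Submodule F (Fin n → F), B ≤ A → B ∈ Q) :
    (Fintype.card F : ℝ) * (((Gr F n (j+1)).filter (fun B => B ∈ Q)).card : ℝ)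
        * (((Gr F n j).card : ℝ) - (((Gr F n j).filter (fun A => A ∈ Q)).card : ℝ))
      ≤ (((Gr F n j).filter (fun A => A ∈ Q)).card : ℝ)
        * (((Gr F n (j+1)).card : ℝ) - (((Gr F n (j+1)).filter (fun B => B ∈ Q)).card : ℝ)) := by
  set q : ℕ := Fintype.card F with hqdef
  set Nj : ℝ := ((Gr F n j).card : ℝ) with hNj
  set N' : ℝ := ((Gr F n (j+1)).card : ℝ) with hN'
  set a : ℝ := (((Gr F n j).filter (fun A => A ∈ Q)).card : ℝ) with ha
  set b : ℝ := (((Gr F n (j+1)).filter (fun B => B ∈ Q)).card : ℝ) with hb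
  have hNjpos : (0:ℝ) < Nj := by
    rw [hNj]
    exact_mod_cast Finset.card_pos.mpr (Gr_nonempty (by omega))
  have hale : a ≤ Nj := by
    rw [ha, hNj]; exact_mod_cast Finset.card_le_card (Finset.filter_subset _ _)
  have hble : b ≤ N' := by
    rw [hb, hN']; exact_mod_cast Finset.card_le_card (Finset.filter_subset _ _)
  have hanonneg : (0:ℝ) ≤ a := by rw [ha]; positivity
  have hbnonneg : (0:ℝ) ≤ b := by rw [hb]; positivity
  set β : ℝ := a / Nj with hβ
  have hNβ : Nj * β = a := by rw [hβ]; exact mul_div_cancel₀ a hNjpos.ne'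
  have hβ0 : 0 ≤ β := div_nonneg hanonneg hNjpos.le
  have hβ1 : β ≤ 1 := by
    rw [hβ, div_le_one hNjpos]; exact hale
  set d : ℝ := (nq q (j+1) : ℝ) with hd
  set D : ℝ := (nq q (n-j) : ℝ) with hD
  have hdpos : (0:ℝ) < d := by
    rw [hd]; exact_mod_cast nq_pos q (j+1) (by omega)
  have hDpos : (0:ℝ) < D := by
    rw [hD]; exact_mod_cast nq_pos q (n-j) (by omega)
  have hflag : Nj * D = N' * d := by
    rw [hNj, hD, hN', hd]
    exact_mod_cast flag_count hj
  -- the indicator and the centered function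
  set ind : Submodule F (Fin n → F) → ℝ := fun A => if A ∈ Q then 1 else 0 with hind
  set f : Submodule F (Fin n → F) → ℝ := fun A => ind A - β with hf
  have hsum_ind : ∑ A ∈ Gr F n j, ind A = a := by
    rw [ha, Finset.card_filter]
    push_cast
    rfl
  have hsum_f : ∑ A ∈ Gr F n j, f A = 0 := by
    rw [hf]
    simp only [Finset.sum_sub_distrib, hsum_ind, Finset.sum_const, nsmul_eq_mul]
    rw [← hNj]
    rw [mul_comm] at hNβ
    linarith [hNβ]
  have hsum_fsq : ∑ A ∈ Gr F n j, (f A)^2 = a * (1 - β) := by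
    have hpt : ∀ A, (f A)^2 = ind A * (1 - 2*β) + β^2 := by
      intro A
      rw [hf, hind]
      by_cases h : A ∈ Q <;> simp [h] <;> ring
    rw [Finset.sum_congr rfl (fun A _ => hpt A)]
    rw [Finset.sum_add_distrib, ← Finset.sum_mul, hsum_ind, Finset.sum_const, nsmul_eq_mul,
      ← hNj]
    linear_combination β * hNβ
  -- the up operator applied to ind and f
  have hup_const : ∀ B ∈ Gr F n (j+1),
      (∑ A ∈ Gr F n j, if A ≤ B then (1:ℝ) else 0) = d := by
    intro B hB
    have := L_down (j := j+1) (by omega) (mem_Gr.mp hB)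
    rw [Finset.card_filter] at this
    rw [hd, ← this]
    push_cast
    simp
  have hup_f : ∀ B ∈ Gr F n (j+1), upS F n j f B = upS F n j ind B - d * β := by
    intro B hB
    rw [upS, upS, hf]
    have h1 : ∑ A ∈ Gr F n j, (if A ≤ B then ind A - β else 0)
        = ∑ A ∈ Gr F n j, ((if A ≤ B then ind A else 0) - β * (if A ≤ B then 1 else 0)) := by
      refine Finset.sum_congr rfl (fun A _ => ?_)
      by_cases h : A ≤ B <;> simp [h]
    rw [h1, Finset.sum_sub_distrib, ← Finset.mul_sum, hup_const B hB]
    ring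
  have hup_ind_mem : ∀ B ∈ (Gr F n (j+1)).filter (fun B => B ∈ Q), upS F n j ind B = d := by
    intro B hB
    obtain ⟨hBG, hBQ⟩ := Finset.mem_filter.mp hB
    rw [upS]
    have h1 : ∀ A ∈ Gr F n j, (if A ≤ B then ind A else 0) = (if A ≤ B then (1:ℝ) else 0) := by
      intro A _
      by_cases h : A ≤ B
      · simp only [if_pos h, hind]
        rw [if_pos (hQ B hBQ A h)]
      · simp [h]
    rw [Finset.sum_congr rfl h1, hup_const B hBG]
  have hup_ind_total : ∑ B ∈ Gr F n (j+1), upS F n j ind B = D * a := by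
    unfold upS
    rw [Finset.sum_comm]
    have h1 : ∀ A ∈ Gr F n j, ∑ B ∈ Gr F n (j+1), (if A ≤ B then ind A else 0)
        = D * ind A := by
      intro A hA
      have h2 : ∑ B ∈ Gr F n (j+1), (if A ≤ B then ind A else 0)
          = (((Gr F n (j+1)).filter (fun B => A ≤ B)).card : ℝ) * ind A := by
        rw [Finset.card_filter]
        push_cast
        rw [Finset.sum_mul]
        refine Finset.sum_congr rfl (fun B _ => ?_)
        by_cases h : A ≤ B <;> simp [h]
      rw [h2, L_up hj (mem_Gr.mp hA), ← hD]
    rw [Finset.sum_congr rfl h1, ← Finset.mul_sum, hsum_ind]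
  have hup_f_total : ∑ B ∈ Gr F n (j+1), upS F n j f B = 0 := by
    rw [Finset.sum_congr rfl hup_f, Finset.sum_sub_distrib, hup_ind_total,
      Finset.sum_const, nsmul_eq_mul, ← hN']
    have : D * a = N' * (d * β) := by
      calc D * a = D * (Nj * β) := by rw [hNβ]
        _ = (Nj * D) * β := by ring
        _ = (N' * d) * β := by rw [hflag]
        _ = N' * (d * β) := by ring
    linarith [this]
  -- split the sum over Q and its complement
  have hsplit : ∑ B ∈ Gr F n (j+1), (upS F n j f B)^2
      = ∑ B ∈ (Gr F n (j+1)).filter (fun B => B ∈ Q), (upS F n j f B)^2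
        + ∑ B ∈ (Gr F n (j+1)).filter (fun B => ¬ B ∈ Q), (upS F n j f B)^2 :=
    (Finset.sum_filter_add_sum_filter_not _ _ _).symm
  have hsplit_lin : ∑ B ∈ Gr F n (j+1), upS F n j f B
      = ∑ B ∈ (Gr F n (j+1)).filter (fun B => B ∈ Q), upS F n j f B
        + ∑ B ∈ (Gr F n (j+1)).filter (fun B => ¬ B ∈ Q), upS F n j f B :=
    (Finset.sum_filter_add_sum_filter_not _ _ _).symm
  have hcards : b + (((Gr F n (j+1)).filter (fun B => ¬ B ∈ Q)).card : ℝ) = N' := by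
    rw [hb, hN']
    exact_mod_cast Finset.card_filter_add_card_filter_not _
  set R : ℝ := (((Gr F n (j+1)).filter (fun B => ¬ B ∈ Q)).card : ℝ) with hR
  have hRnonneg : (0:ℝ) ≤ R := by rw [hR]; exact Nat.cast_nonneg _
  -- value on the Q part
  have hQpart : ∑ B ∈ (Gr F n (j+1)).filter (fun B => B ∈ Q), (upS F n j f B)^2
      = b * (d * (1 - β))^2 := by
    have h1 : ∀ B ∈ (Gr F n (j+1)).filter (fun B => B ∈ Q),
        (upS F n j f B)^2 = (d * (1-β))^2 := by
      intro B hB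
      rw [hup_f B (Finset.mem_filter.mp hB).1, hup_ind_mem B hB]
      ring_nf
    rw [Finset.sum_congr rfl h1, Finset.sum_const, nsmul_eq_mul, ← hb]
  have hQpart_lin : ∑ B ∈ (Gr F n (j+1)).filter (fun B => B ∈ Q), upS F n j f B
      = b * (d * (1 - β)) := by
    have h1 : ∀ B ∈ (Gr F n (j+1)).filter (fun B => B ∈ Q),
        upS F n j f B = d * (1-β) := by
      intro B hB
      rw [hup_f B (Finset.mem_filter.mp hB).1, hup_ind_mem B hB]
      ring
    rw [Finset.sum_congr rfl h1, Finset.sum_const, nsmul_eq_mul, ← hb]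
  -- Cauchy-Schwarz on the complement part
  have hCS : (∑ B ∈ (Gr F n (j+1)).filter (fun B => ¬ B ∈ Q), upS F n j f B)^2
      ≤ R * ∑ B ∈ (Gr F n (j+1)).filter (fun B => ¬ B ∈ Q), (upS F n j f B)^2 := by
    have := Finset.sum_mul_sq_le_sq_mul_sq ((Gr F n (j+1)).filter (fun B => ¬ B ∈ Q))
      (fun _ => (1:ℝ)) (fun B => upS F n j f B)
    simpa [hR, Finset.sum_const, nsmul_eq_mul] using this
  have hRpart_lin : ∑ B ∈ (Gr F n (j+1)).filter (fun B => ¬ B ∈ Q), upS F n j f B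
      = - (b * (d * (1 - β))) := by
    have := hsplit_lin
    rw [hup_f_total, hQpart_lin] at this
    linarith
  -- the spectral bound
  have hspec := spec j hj f hsum_f
  rw [hsum_fsq] at hspec
  set S : ℝ := ((q : ℝ) * nq q j * nq q (n-1-j)) with hS
  have hSnonneg : (0:ℝ) ≤ S := by rw [hS]; positivity
  have hqS : (q:ℝ) * S ≤ d * D := by
    rw [hS, hd, hD]
    have h1 : q * nq q j + 1 = nq q (j+1) := by rw [nq_succ]; ring
    have h2 : q * nq q (n-1-j) + 1 = nq q (n-j) := by
      rw [show n-j = (n-1-j)+1 by omega, nq_succ]; ring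
    have hNat : (q * (q * nq q j * nq q (n-1-j))) ≤ nq q (j+1) * nq q (n-j) := by
      calc q * (q * nq q j * nq q (n-1-j)) = (q * nq q j) * (q * nq q (n-1-j)) := by ring
        _ ≤ (q * nq q j + 1) * (q * nq q (n-1-j) + 1) :=
            Nat.mul_le_mul (Nat.le_succ _) (Nat.le_succ _)
        _ = nq q (j+1) * nq q (n-j) := by rw [h1, h2]
    calc (q:ℝ) * ((q:ℝ) * nq q j * nq q (n-1-j))
        = ((q * (q * nq q j * nq q (n-1-j)) : ℕ) : ℝ) := by push_cast; ring
      _ ≤ ((nq q (j+1) * nq q (n-j) : ℕ) : ℝ) := by exact_mod_cast hNat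
      _ = (nq q (j+1) : ℝ) * (nq q (n-j) : ℝ) := by push_cast; ring
  -- master inequality
  have hmaster : R * (S * (a * (1 - β))) ≥ R * (b * (d*(1-β))^2) + (b * (d * (1 - β)))^2 := by
    have h1 : ∑ B ∈ (Gr F n (j+1)).filter (fun B => ¬ B ∈ Q), (upS F n j f B)^2
        = (∑ B ∈ Gr F n (j+1), (upS F n j f B)^2) - b * (d*(1-β))^2 := by
      rw [hsplit, hQpart]; ring
    have h2 : (b * (d * (1 - β)))^2 ≤ R * ((∑ B ∈ Gr F n (j+1), (upS F n j f B)^2) - b * (d*(1-β))^2) := by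
      rw [← h1]
      calc (b * (d * (1 - β)))^2 = (∑ B ∈ (Gr F n (j+1)).filter (fun B => ¬ B ∈ Q), upS F n j f B)^2 := by
            rw [hRpart_lin]; ring
        _ ≤ R * ∑ B ∈ (Gr F n (j+1)).filter (fun B => ¬ B ∈ Q), (upS F n j f B)^2 := hCS
    have h3 : R * (∑ B ∈ Gr F n (j+1), (upS F n j f B)^2) ≤ R * (S * (a * (1 - β))) :=
      mul_le_mul_of_nonneg_left hspec hRnonneg
    have h4 : R * ((∑ B ∈ Gr F n (j+1), (upS F n j f B)^2) - b * (d*(1-β))^2)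
        = R * (∑ B ∈ Gr F n (j+1), (upS F n j f B)^2) - R * (b * (d*(1-β))^2) := by ring
    rw [h4] at h2
    linarith [h2, h3]
  -- conclude
  rcases eq_or_lt_of_le hβ1 with hβeq | hβlt
  · -- β = 1 : a = Nj, LHS is zero
    have haN : a = Nj := by rw [← hNβ, hβeq, mul_one]
    have : Nj - a = 0 := by rw [haN]; ring
    rw [this, mul_zero]
    have : 0 ≤ a * (N' - b) := mul_nonneg hanonneg (by linarith)
    linarith
  · have h1mβ : (0:ℝ) < 1 - β := by linarith
    -- multiply master by q and use qS ≤ dD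
    have hq0 : (0:ℝ) < q := by
      have : (1:ℕ) ≤ q := NeZero.one_le
      exact_mod_cast Nat.lt_of_lt_of_le Nat.zero_lt_one this
    have step1 : (q:ℝ) * (R * (S * (a * (1-β)))) ≥ (q:ℝ) * (b * d^2 * (1-β)^2 * N') := by
      have expand : R * (b * (d*(1-β))^2) + (b * (d * (1 - β)))^2
          = b * d^2 * (1-β)^2 * (R + b) := by ring
      have hRb : R + b = N' := by linarith [hcards]
      rw [expand, hRb] at hmaster
      exact mul_le_mul_of_nonneg_left hmaster hq0.le

    have step2 : (d*D) * (R * (a * (1-β))) ≥ (q:ℝ) * (b * d^2 * (1-β)^2 * N') := by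
      have hfac : (0:ℝ) ≤ R * (a * (1-β)) :=
        mul_nonneg hRnonneg (mul_nonneg hanonneg h1mβ.le)
      calc (d*D) * (R * (a * (1-β))) ≥ ((q:ℝ)*S) * (R * (a * (1-β))) :=
            mul_le_mul_of_nonneg_right hqS hfac
        _ = (q:ℝ) * (R * (S * (a * (1-β)))) := by ring
        _ ≥ (q:ℝ) * (b * d^2 * (1-β)^2 * N') := step1
    -- rewrite N' * d = Nj * D and cancel d * D
    have step3 : (d*D) * (R * (a * (1-β))) ≥ (d*D) * ((q:ℝ) * b * (1-β)^2 * Nj) := by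
      have heq : (q:ℝ) * (b * d^2 * (1-β)^2 * N') = (d*D) * ((q:ℝ) * b * (1-β)^2 * Nj) := by
        have hdn : d * N' = Nj * D := by linarith [hflag]
        linear_combination ((q:ℝ) * b * (1-β)^2 * d) * hdn
      linarith [step2, heq]
    have step4 : (q:ℝ)*b*(1-β)^2*Nj ≤ R * (a * (1-β)) :=
      le_of_mul_le_mul_left
        (show (d*D) * ((q:ℝ)*b*(1-β)^2*Nj) ≤ (d*D) * (R*(a*(1-β))) by linarith [step3])
        (show (0:ℝ) < d*D by positivity)
    have step5 : (q:ℝ) * b * (1-β) * Nj ≤ R * a := by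
      rw [← sub_nonneg]
      have h4' : (0:ℝ) ≤ R * (a * (1-β)) - (q:ℝ)*b*(1-β)^2*Nj := by linarith [step4]
      have expand : R * a - (q:ℝ) * b * (1-β) * Nj
          = (R * (a * (1-β)) - (q:ℝ) * b * (1-β)^2 * Nj) / (1-β) := by
        field_simp
      rw [expand]
      exact div_nonneg h4' h1mβ.le
    have hfinal : (1-β) * Nj = Nj - a := by
      rw [← hNβ]; ring
    calc (q:ℝ) * b * (Nj - a) = (q:ℝ) * b * ((1-β) * Nj) := by rw [hfinal]
      _ = (q:ℝ) * b * (1-β) * Nj := by ring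
      _ ≤ R * a := step5
      _ = a * (N' - b) := by rw [show R = N' - b by linarith [hcards]]; ring

/-! ### From `mu` to Finset counts, and the final induction -/

lemma mu_eq (j : ℕ) (Q : Set (Submodule F (Fin n → F))) :
    mu F n j Q
      = (((Gr F n j).filter (fun A => A ∈ Q)).card : ℝ) / ((Gr F n j).card : ℝ) := by
  have h1 : Nat.card {A : Submodule F (Fin n → F) | A ∈ Q ∧ finrank F A = j}
      = ((Gr F n j).filter (fun A => A ∈ Q)).card := by
    rw [Gr_filter_card]
    exact Nat.card_congr (Equiv.subtypeEquivRight (fun A => by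
      simp only [Set.mem_setOf_eq]; tauto))
  have h2 : Nat.card {A : Submodule F (Fin n → F) | finrank F A = j} = (Gr F n j).card := by
    calc Nat.card {A : Submodule F (Fin n → F) | finrank F A = j}
        = Nat.card {A : Submodule F (Fin n → F) // finrank F A = j ∧ True} :=
          Nat.card_congr (Equiv.subtypeEquivRight (fun A => by
            simp only [Set.mem_setOf_eq, and_true]))
      _ = (@Finset.filter _ (fun _ => True) (fun _ => Classical.propDecidable _)
            (Gr F n j)).card := (Gr_filter_card _ _).symm
      _ = (Gr F n j).card := by simp
  rw [mu, h1, h2]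

lemma mu_nonneg (j : ℕ) (Q : Set (Submodule F (Fin n → F))) : 0 ≤ mu F n j Q := by
  rw [mu_eq]
  positivity

lemma mu_le_one (j : ℕ) (Q : Set (Submodule F (Fin n → F))) : mu F n j Q ≤ 1 := by
  rw [mu_eq]
  rcases Nat.eq_zero_or_pos (Gr F n j).card with h | h
  · rw [h]; norm_num
  · rw [div_le_one (by exact_mod_cast h)]
    exact_mod_cast Finset.card_le_card (Finset.filter_subset _ _)

/-- The one-step inequality in density form. -/
lemma one_step_mu {j : ℕ} (hj : j + 1 ≤ n) (Q : Set (Submodule F (Fin n → F)))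
    (hQ : ∀ A ∈ Q, ∀ B : Submodule F (Fin n → F), B ≤ A → B ∈ Q) :
    (Fintype.card F : ℝ) * mu F n (j+1) Q * (1 - mu F n j Q)
      ≤ mu F n j Q * (1 - mu F n (j+1) Q) := by
  set q : ℕ := Fintype.card F
  set Nj : ℝ := ((Gr F n j).card : ℝ) with hNj
  set N' : ℝ := ((Gr F n (j+1)).card : ℝ) with hN'
  set a : ℝ := (((Gr F n j).filter (fun A => A ∈ Q)).card : ℝ) with ha
  set b : ℝ := (((Gr F n (j+1)).filter (fun B => B ∈ Q)).card : ℝ) with hb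
  have hNjpos : (0:ℝ) < Nj := by
    rw [hNj]; exact_mod_cast Finset.card_pos.mpr (Gr_nonempty (by omega))
  have hN'pos : (0:ℝ) < N' := by
    rw [hN']; exact_mod_cast Finset.card_pos.mpr (Gr_nonempty (by omega))
  have key := one_step hj Q hQ
  rw [mu_eq j Q, mu_eq (j+1) Q, ← hNj, ← hN', ← ha, ← hb]
  have hNjne : Nj ≠ 0 := hNjpos.ne'
  have hN'ne : N' ≠ 0 := hN'pos.ne'
  have e1 : (q:ℝ) * (b/N') * (1 - a/Nj) = ((q:ℝ) * b * (Nj - a)) / (Nj * N') := by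
    rw [one_sub_div hNjne, mul_assoc, div_mul_div_comm, ← mul_div_assoc]
    congr 1
    · ring
    · ring
  have e2 : (a/Nj) * (1 - b/N') = (a * (N' - b)) / (Nj * N') := by
    rw [one_sub_div hN'ne, div_mul_div_comm]
  rw [e1, e2]
  rw [div_le_div_iff_of_pos_right (by positivity)]
  exact key

lemma main_claim (Q : Set (Submodule F (Fin n → F)))
    (hQ : ∀ A ∈ Q, ∀ B : Submodule F (Fin n → F), B ≤ A → B ∈ Q)
    {k : ℕ} {z : ℝ} (hz : 0 < z) (hmu : mu F n k Q = 1 / (1 + z)) :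
    ∀ c : ℕ, k + c ≤ n → mu F n (k+c) Q * (1 + (Fintype.card F : ℝ)^c * z) ≤ 1 := by
  intro c
  induction c with
  | zero =>
    intro _
    rw [Nat.add_zero, pow_zero, one_mul, hmu]
    have hne : (1:ℝ) + z ≠ 0 := by positivity
    rw [div_mul_cancel₀ _ hne]
  | succ c ih =>
    intro h
    have hkc : k + c ≤ n := by omega
    have hIH := ih hkc
    have hstep := one_step_mu (j := k + c) (by omega) Q hQ
    set q : ℝ := (Fintype.card F : ℝ) with hq
    have hq1 : (1:ℝ) ≤ q := by
      rw [hq]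
      exact_mod_cast Fintype.one_lt_card.le
    set μ1 : ℝ := mu F n (k+c) Q with hμ1
    set μ2 : ℝ := mu F n (k+c+1) Q with hμ2
    have hμ2nonneg : 0 ≤ μ2 := mu_nonneg _ _
    have hμ2le : μ2 ≤ 1 := mu_le_one _ _
    have hμ1nonneg : 0 ≤ μ1 := mu_nonneg _ _
    set w : ℝ := q^c * z with hw
    have hwnonneg : (0:ℝ) ≤ w := by
      rw [hw]; positivity
    have h1w : (0:ℝ) ≤ 1 + w := by linarith
    have h2m := mul_le_mul_of_nonneg_right hstep h1w
    have hIH1 := mul_le_mul_of_nonneg_right hIH (by linarith : (0:ℝ) ≤ 1 - μ2)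
    have hIH2 := mul_le_mul_of_nonneg_right hIH
      (mul_nonneg (by linarith : (0:ℝ) ≤ q) hμ2nonneg)
    have target : μ2 * (1 + q * w) ≤ 1 := by nlinarith [h2m, hIH1, hIH2]
    have hpow : q^(c+1) * z = q * w := by rw [hw, pow_succ]; ring
    show mu F n (k+(c+1)) Q * (1 + q^(c+1) * z) ≤ 1
    rw [show k+(c+1) = k+c+1 by omega, hpow]
    exact target

end Sharp

/-- Sharp threshold for ideals: μ_k(Q) = 1/(1+z) implies μ_{k+1}(Q) ≤ 1/(1+qz),
and μ_{k+c}(Q) ≤ 1/(1+q^c·z) for 1 ≤ c with k + c ≤ n. -/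
theorem sharp_threshold (F : Type) [Field F] [Fintype F] (n k : ℕ)
    (hk : 1 ≤ k) (hkn : k + 1 ≤ n)
    (Q : Set (Submodule F (Fin n → F)))
    (hQ : ∀ A ∈ Q, ∀ B : Submodule F (Fin n → F), B ≤ A → B ∈ Q)
    (z : ℝ) (hz : 0 < z) (hmu : mu F n k Q = 1 / (1 + z)) :
    mu F n (k + 1) Q ≤ 1 / (1 + (Fintype.card F : ℝ) * z)
    ∧ ∀ c : ℕ, 1 ≤ c → k + c ≤ n →
        mu F n (k + c) Q ≤ 1 / (1 + (Fintype.card F : ℝ) ^ c * z) := by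
  have main := Sharp.main_claim Q hQ hz hmu
  have part2 : ∀ c : ℕ, 1 ≤ c → k + c ≤ n →
      mu F n (k + c) Q ≤ 1 / (1 + (Fintype.card F : ℝ) ^ c * z) := by
    intro c _ hcn
    have h := main c hcn
    have hpos : (0:ℝ) < 1 + (Fintype.card F : ℝ) ^ c * z := by positivity
    rw [le_div_iff₀ hpos]
    exact h
  refine ⟨?_, part2⟩
  have := part2 1 le_rfl hkn
  rwa [pow_one] at this
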